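/- Let z be a class of admissible type, with associated derivation ∂_z. If f ∈ Λ^i_{≥1} is homogeneous of degree i and q^{A_*}·f is invertible in Λ_{≥0}, then ∂_z f lies in q^{A_*}·f + Λ_{≥1} and is invertible in Λ. Consequently the Schwarzian S_z f = ∂_z(∂_z∂_z f·(∂_z f)⁻¹) − (1/2)·(∂_z∂_z f·(∂_z f)⁻¹)² is well defined for such f, and it lies in Λ⁴_{≥0}. -/

import Mathlib

namespace Nov

/-- The lattice `H = ℤ^{r+2}`. -/
abbrev H (r : ℕ) : Type := Fin (r + 2) → ℤ

/-- The delta function `q^{A₀}` at `A₀ ∈ H`. -/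
noncomputable def delta {r : ℕ} (A₀ : H r) : H r → ℚ :=
  fun A => if A = A₀ then 1 else 0

/-- The unit element `q^0` of the Novikov ring. -/
noncomputable def one (r : ℕ) : H r → ℚ := delta (0 : H r)

/-- The convolution product `(x·y)(A) = ∑_{A₁+A₂=A} x(A₁)·y(A₂)`. -/
noncomputable def mul {r : ℕ} (x y : H r → ℚ) : H r → ℚ :=
  fun A => ∑ᶠ B : H r, x B * y (A - B)

/-- The degree-2 derivation `(∂_z x)(A) = ∑_{A₁+A₂=A} z_{A₁}(A₂)·x(A₂)`
associated to a family `z` of additive maps `H → ℚ`. -/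
noncomputable def dz {r : ℕ} (z : H r → (H r →+ ℚ)) (x : H r → ℚ) : H r → ℚ :=
  fun A => ∑ᶠ B : H r, z (A - B) B * x B

/-- The `ν`-finiteness condition: for every `C`, only finitely many support
elements `A` with `ν(A) ≤ C`. -/
def NuFinite {r : ℕ} (ν : H r →+ ℤ) (x : H r → ℚ) : Prop :=
  ∀ C : ℤ, {A : H r | x A ≠ 0 ∧ ν A ≤ C}.Finite

/-- Membership in the homogeneous piece `Λ^i`: support in `{2μ = i}` plus
`ν`-finiteness. -/
def MemHom {r : ℕ} (μ ν : H r →+ ℤ) (i : ℤ) (x : H r → ℚ) : Prop :=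
  (∀ A, x A ≠ 0 → 2 * μ A = i) ∧ NuFinite ν x

/-- Membership in `Λ = ⊕_i Λ^i`: `ν`-finiteness plus finitely many occurring
degrees. -/
def MemLambda {r : ℕ} (μ ν : H r →+ ℤ) (x : H r → ℚ) : Prop :=
  NuFinite ν x ∧ ({i : ℤ | ∃ A, x A ≠ 0 ∧ 2 * μ A = i}).Finite

/-- Support contained in `{ν ≥ k}` (membership in `Λ_{≥k}`, for elements of
`Λ`). -/
def MemGE {r : ℕ} (ν : H r →+ ℤ) (k : ℤ) (x : H r → ℚ) : Prop :=
  ∀ A, x A ≠ 0 → k ≤ ν A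

/-- A class `z` of admissible type: supported on `{μ = 1}`, `ν`-finite, equal
to `ν` at `A_*`, and vanishing on all `A₁ ≠ A_*` with `ν(A₁) < 0`. -/
structure Admissible {r : ℕ} (μ ν : H r →+ ℤ) (Astar : H r)
    (z : H r → (H r →+ ℚ)) : Prop where
  supp_mu : ∀ A₁, z A₁ ≠ 0 → μ A₁ = 1
  nu_fin : ∀ C : ℤ, {A₁ : H r | z A₁ ≠ 0 ∧ ν A₁ ≤ C}.Finite
  at_star : ∀ A, z Astar A = (ν A : ℚ)
  vanish_neg : ∀ A₁, A₁ ≠ Astar → ν A₁ < 0 → z A₁ = 0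

open scoped Classical in
/-- The (two-sided) inverse of `x` within `Λ`, chosen if it exists. -/
noncomputable def invN {r : ℕ} (μ ν : H r →+ ℤ) (x : H r → ℚ) : H r → ℚ :=
  if h : ∃ y, MemLambda μ ν y ∧ mul x y = one r ∧ mul y x = one r then
    h.choose
  else 0

/-- The Schwarzian
`S_z f = ∂_z(∂_z∂_z f·(∂_z f)⁻¹) − (1/2)·(∂_z∂_z f·(∂_z f)⁻¹)²`. -/
noncomputable def Sz {r : ℕ} (μ ν : H r →+ ℤ) (z : H r → (H r →+ ℚ))
    (f : H r → ℚ) : H r → ℚ :=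
  dz z (mul (dz z (dz z f)) (invN μ ν (dz z f)))
    - (1 / 2 : ℚ) •
        mul (mul (dz z (dz z f)) (invN μ ν (dz z f)))
          (mul (dz z (dz z f)) (invN μ ν (dz z f)))

end Nov

namespace Nov

open Function

variable {r : ℕ} {μ ν : H r →+ ℤ} {Astar : H r} {z : H r → (H r →+ ℚ)}

/-- Homogeneity of degree `d`. -/
def HomD (μ : H r →+ ℤ) (d : ℤ) (x : H r → ℚ) : Prop := ∀ A, x A ≠ 0 → 2 * μ A = d

lemma mul_apply (x y : H r → ℚ) (A : H r) : mul x y A = ∑ᶠ B : H r, x B * y (A - B) := rfl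

lemma dz_apply (x : H r → ℚ) (A : H r) : dz z x A = ∑ᶠ B : H r, z (A - B) B * x B := rfl

lemma finsum_ne_zero {ι : Type*} {φ : ι → ℚ} (h : ∑ᶠ B, φ B ≠ 0) : ∃ B, φ B ≠ 0 := by
  by_contra hc
  push_neg at hc
  exact h (finsum_eq_zero_of_forall_eq_zero hc)

lemma nu_sub (A B : H r) : ν (A - B) = ν A - ν B := map_sub ν A B

lemma NuFinite.lb {x : H r → ℚ} (hx : NuFinite ν x) : ∃ m : ℤ, ∀ A, x A ≠ 0 → m ≤ ν A := by
  classical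
  refine ⟨(insert (1 : ℤ) ((hx 0).toFinset.image ν)).min' ⟨1, Finset.mem_insert_self _ _⟩, ?_⟩
  intro A hA
  by_cases h0 : ν A ≤ 0
  · exact Finset.min'_le _ _ (Finset.mem_insert_of_mem
      (Finset.mem_image.2 ⟨A, (hx 0).mem_toFinset.2 ⟨hA, h0⟩, rfl⟩))
  · exact le_trans (Finset.min'_le _ _ (Finset.mem_insert_self _ _)) (by omega)

lemma conv_support_finite {x y : H r → ℚ} (hx : NuFinite ν x) (hy : NuFinite ν y) (A : H r) :
    (support fun B => x B * y (A - B)).Finite := by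
  obtain ⟨m, hm⟩ := hy.lb
  refine (hx (ν A - m)).subset ?_
  intro B hB
  rcases mul_ne_zero_iff.1 hB with ⟨h1, h2⟩
  have h3 := hm _ h2
  have h4 : ν (A - B) = ν A - ν B := nu_sub A B
  exact ⟨h1, by omega⟩

lemma z_ne_of_apply {C B : H r} (h : z C B ≠ 0) : z C ≠ 0 := fun h0 => h (by simp [h0])

lemma Admissible.z_lb (hz : Admissible μ ν Astar z) (hνA : ν Astar = -1) :
    ∀ C, z C ≠ 0 → -1 ≤ ν C := by
  intro C hC
  by_cases h : C = Astar
  · subst h; omega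
  · by_contra hlt
    exact hC (hz.vanish_neg C h (by omega))

lemma dz_support_finite (hz : Admissible μ ν Astar z) (hνA : ν Astar = -1)
    {x : H r → ℚ} (hx : NuFinite ν x) (A : H r) :
    (support fun B => z (A - B) B * x B).Finite := by
  refine (hx (ν A + 1)).subset ?_
  intro B hB
  rcases mul_ne_zero_iff.1 hB with ⟨h1, h2⟩
  have h3 := hz.z_lb hνA _ (z_ne_of_apply h1)
  have h4 : ν (A - B) = ν A - ν B := nu_sub A B
  exact ⟨h2, by omega⟩

/-! ### Closure lemmas for `NuFinite` -/

lemma NuFinite.subset_supp {x y : H r → ℚ} (hx : NuFinite ν x)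
    (h : ∀ A, y A ≠ 0 → x A ≠ 0) : NuFinite ν y :=
  fun C => (hx C).subset fun A hA => ⟨h A hA.1, hA.2⟩

lemma NuFinite.sub {x y : H r → ℚ} (hx : NuFinite ν x) (hy : NuFinite ν y) :
    NuFinite ν (x - y) := fun C => by
  refine ((hx C).union (hy C)).subset ?_
  rintro A ⟨hA, hC⟩
  by_cases h : x A ≠ 0
  · exact Or.inl ⟨h, hC⟩
  · push_neg at h
    refine Or.inr ⟨fun h0 => hA ?_, hC⟩
    simp [Pi.sub_apply, h, h0]

lemma NuFinite.add {x y : H r → ℚ} (hx : NuFinite ν x) (hy : NuFinite ν y) :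
    NuFinite ν (x + y) := fun C => by
  refine ((hx C).union (hy C)).subset ?_
  rintro A ⟨hA, hC⟩
  by_cases h : x A ≠ 0
  · exact Or.inl ⟨h, hC⟩
  · push_neg at h
    refine Or.inr ⟨fun h0 => hA ?_, hC⟩
    simp [Pi.add_apply, h, h0]

lemma NuFinite.neg {x : H r → ℚ} (hx : NuFinite ν x) : NuFinite ν (-x) :=
  hx.subset_supp fun A hA => by simpa using hA

lemma NuFinite.smul {x : H r → ℚ} (hx : NuFinite ν x) (c : ℚ) : NuFinite ν (c • x) :=
  hx.subset_supp fun A hA => by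
    intro h0
    apply hA
    simp [Pi.smul_apply, h0]

lemma nuFinite_delta (A₀ : H r) : NuFinite ν (delta A₀) := fun C =>
  (Set.finite_singleton A₀).subset fun A hA => by
    by_contra h
    exact hA.1 (if_neg h)

lemma nuFinite_one : NuFinite ν (one r) := nuFinite_delta 0

lemma NuFinite.mul {x y : H r → ℚ} (hx : NuFinite ν x) (hy : NuFinite ν y) :
    NuFinite ν (Nov.mul x y) := by
  intro C
  obtain ⟨mx, hmx⟩ := hx.lb
  obtain ⟨my, hmy⟩ := hy.lb
  have hs : {A | Nov.mul x y A ≠ 0 ∧ ν A ≤ C} ⊆ (fun p : H r × H r => p.1 + p.2) ''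
      ({A | x A ≠ 0 ∧ ν A ≤ C - my} ×ˢ {A | y A ≠ 0 ∧ ν A ≤ C - mx}) := by
    rintro A ⟨hA, hC⟩
    rw [mul_apply] at hA
    obtain ⟨B, hB⟩ := finsum_ne_zero hA
    rcases mul_ne_zero_iff.1 hB with ⟨h1, h2⟩
    have e1 := hmx _ h1
    have e2 := hmy _ h2
    have e3 : ν (A - B) = ν A - ν B := nu_sub A B
    have f1 : ν B ≤ C - my := by omega
    have f2 : ν (A - B) ≤ C - mx := by omega
    exact ⟨(B, A - B), ⟨⟨h1, f1⟩, ⟨h2, f2⟩⟩, by simp⟩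
  exact (((hx (C - my)).prod (hy (C - mx))).image _).subset hs

lemma dz_nufinite (hz : Admissible μ ν Astar z) (hνA : ν Astar = -1)
    {x : H r → ℚ} (hx : NuFinite ν x) : NuFinite ν (dz z x) := by
  intro C
  obtain ⟨mx, hmx⟩ := hx.lb
  have hs : {A | dz z x A ≠ 0 ∧ ν A ≤ C} ⊆ (fun p : H r × H r => p.1 + p.2) ''
      ({A₁ | z A₁ ≠ 0 ∧ ν A₁ ≤ C - mx} ×ˢ {B | x B ≠ 0 ∧ ν B ≤ C + 1}) := by
    rintro A ⟨hA, hC⟩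
    rw [dz_apply] at hA
    obtain ⟨B, hB⟩ := finsum_ne_zero hA
    rcases mul_ne_zero_iff.1 hB with ⟨h1, h2⟩
    have e1 := hmx _ h2
    have e2 := hz.z_lb hνA _ (z_ne_of_apply h1)
    have e3 : ν (A - B) = ν A - ν B := nu_sub A B
    have f1 : ν (A - B) ≤ C - mx := by omega
    have f2 : ν B ≤ C + 1 := by omega
    exact ⟨(A - B, B), ⟨⟨z_ne_of_apply h1, f1⟩, ⟨h2, f2⟩⟩, by simp⟩
  exact (((hz.nu_fin (C - mx)).prod (hx (C + 1))).image _).subset hs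

/-! ### Closure lemmas for `MemGE` -/

lemma MemGE.mono {k l : ℤ} {x : H r → ℚ} (h : k ≤ l) (hx : MemGE ν l x) : MemGE ν k x :=
  fun A hA => le_trans h (hx A hA)

lemma MemGE.of_eq {k l : ℤ} {x : H r → ℚ} (hx : MemGE ν k x) (h : k = l) : MemGE ν l x :=
  h ▸ hx

lemma MemGE.mul {k l : ℤ} {x y : H r → ℚ} (hx : MemGE ν k x) (hy : MemGE ν l y) :
    MemGE ν (k + l) (mul x y) := by
  intro A hA
  rw [mul_apply] at hA
  obtain ⟨B, hB⟩ := finsum_ne_zero hA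
  rcases mul_ne_zero_iff.1 hB with ⟨h1, h2⟩
  have e1 := hx _ h1
  have e2 := hy _ h2
  have e3 : ν (A - B) = ν A - ν B := nu_sub A B
  omega

lemma MemGE.sub {k : ℤ} {x y : H r → ℚ} (hx : MemGE ν k x) (hy : MemGE ν k y) :
    MemGE ν k (x - y) := by
  intro A hA
  by_cases h : x A ≠ 0
  · exact hx A h
  · push_neg at h
    refine hy A fun h0 => hA ?_
    simp [Pi.sub_apply, h, h0]

lemma MemGE.neg {k : ℤ} {x : H r → ℚ} (hx : MemGE ν k x) : MemGE ν k (-x) :=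
  fun A hA => hx A (by simpa using hA)

lemma MemGE.smul {k : ℤ} {x : H r → ℚ} (hx : MemGE ν k x) (c : ℚ) : MemGE ν k (c • x) :=
  fun A hA => hx A fun h0 => hA (by simp [Pi.smul_apply, h0])

lemma memGE_delta (A₀ : H r) : MemGE ν (ν A₀) (delta A₀) := by
  intro A hA
  have : A = A₀ := by by_contra h; exact hA (if_neg h)
  subst this; exact le_refl _

lemma memGE_one : MemGE ν 0 (one r) := by
  have := memGE_delta (ν := ν) (0 : H r)
  simpa [one] using this

lemma dz_ge0 (hz : Admissible μ ν Astar z) (hνA : ν Astar = -1)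
    {x : H r → ℚ} (hx : MemGE ν 0 x) : MemGE ν 0 (dz z x) := by
  intro A hA
  rw [dz_apply] at hA
  obtain ⟨B, hB⟩ := finsum_ne_zero hA
  rcases mul_ne_zero_iff.1 hB with ⟨h1, h2⟩
  have hxB := hx _ h2
  have hsub : ν (A - B) = ν A - ν B := nu_sub A B
  by_cases h : A - B = Astar
  · have hstar : ν (A - B) = -1 := by rw [h, hνA]
    rw [h, hz.at_star] at h1
    have hν1 : ν B ≠ 0 := by
      intro h0
      rw [h0] at h1
      simp at h1
    omega
  · have h0 : (0 : ℤ) ≤ ν (A - B) := by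
      by_contra hn
      exact z_ne_of_apply h1 (hz.vanish_neg _ h (by omega))
    omega

/-! ### Closure lemmas for `HomD` -/

lemma HomD.of_eq {d e : ℤ} {x : H r → ℚ} (hx : HomD μ d x) (h : d = e) : HomD μ e x := h ▸ hx

lemma HomD.mul {d e : ℤ} {x y : H r → ℚ} (hx : HomD μ d x) (hy : HomD μ e y) :
    HomD μ (d + e) (Nov.mul x y) := by
  intro A hA
  rw [mul_apply] at hA
  obtain ⟨B, hB⟩ := finsum_ne_zero hA
  rcases mul_ne_zero_iff.1 hB with ⟨h1, h2⟩
  have e1 := hx _ h1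
  have e2 := hy _ h2
  have e3 : μ (A - B) = μ A - μ B := map_sub μ A B
  omega

lemma HomD.sub {d : ℤ} {x y : H r → ℚ} (hx : HomD μ d x) (hy : HomD μ d y) :
    HomD μ d (x - y) := by
  intro A hA
  by_cases h : x A ≠ 0
  · exact hx A h
  · push_neg at h
    refine hy A fun h0 => hA ?_
    simp [Pi.sub_apply, h, h0]

lemma HomD.neg {d : ℤ} {x : H r → ℚ} (hx : HomD μ d x) : HomD μ d (-x) :=
  fun A hA => hx A (by simpa using hA)

lemma HomD.smul {d : ℤ} {x : H r → ℚ} (hx : HomD μ d x) (c : ℚ) : HomD μ d (c • x) :=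
  fun A hA => hx A fun h0 => hA (by simp [Pi.smul_apply, h0])

lemma homD_delta (A₀ : H r) : HomD μ (2 * μ A₀) (delta A₀) := by
  intro A hA
  have : A = A₀ := by by_contra h; exact hA (if_neg h)
  subst this; rfl

lemma homD_one : HomD μ 0 (one r) := by
  have := homD_delta (μ := μ) (0 : H r)
  simpa [one] using this

lemma dz_hom (hz : Admissible μ ν Astar z) {d : ℤ} {x : H r → ℚ} (hx : HomD μ d x) :
    HomD μ (d + 2) (dz z x) := by
  intro A hA
  rw [dz_apply] at hA
  obtain ⟨B, hB⟩ := finsum_ne_zero hA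
  rcases mul_ne_zero_iff.1 hB with ⟨h1, h2⟩
  have e1 := hz.supp_mu _ (z_ne_of_apply h1)
  have e2 := hx _ h2
  have e3 : μ (A - B) = μ A - μ B := map_sub μ A B
  omega

lemma homD_memLambda {d : ℤ} {x : H r → ℚ} (hNu : NuFinite ν x) (h : HomD μ d x) :
    MemLambda μ ν x := by
  refine ⟨hNu, (Set.finite_singleton d).subset ?_⟩
  rintro j ⟨A, h1, h2⟩
  have := h A h1
  simp only [Set.mem_singleton_iff]
  omega

end Nov

namespace Nov

open Function Pointwise

variable {r : ℕ} {μ ν : H r →+ ℤ} {Astar : H r} {z : H r → (H r →+ ℚ)}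

/-! ### Ring identities for `mul` -/

lemma mul_delta_left (A₀ : H r) (x : H r → ℚ) : mul (delta A₀) x = fun A => x (A - A₀) := by
  funext A
  rw [mul_apply, finsum_eq_single _ A₀ (fun B hB => by simp [delta, hB])]
  simp [delta]

lemma mul_one_right (x : H r → ℚ) : mul x (one r) = x := by
  funext A
  rw [mul_apply, finsum_eq_single _ A (fun B hB => ?_)]
  · simp [one, delta]
  · have h : A - B ≠ 0 := fun h0 => hB (sub_eq_zero.1 h0).symm
    simp [one, delta, h]

lemma mul_comm' (x y : H r → ℚ) : mul x y = mul y x := by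
  funext A
  rw [mul_apply, mul_apply]
  calc ∑ᶠ B, x B * y (A - B) = ∑ᶠ B, y (A - B) * x (A - (A - B)) := by
        refine finsum_congr fun B => ?_
        rw [sub_sub_cancel, mul_comm]
    _ = ∑ᶠ B, y B * x (A - B) := finsum_comp (g := fun B => y B * x (A - B)) (fun B => A - B) (Equiv.subLeft A).bijective

lemma mul_zero_left (x : H r → ℚ) : mul (0 : H r → ℚ) x = 0 := by
  funext A
  rw [mul_apply]
  exact finsum_eq_zero_of_forall_eq_zero fun B => by simp

lemma mul_one_left (x : H r → ℚ) : mul (one r) x = x := by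
  rw [mul_comm', mul_one_right]

lemma mul_add_right {x y w : H r → ℚ} (hx : NuFinite ν x) (hy : NuFinite ν y)
    (hw : NuFinite ν w) : mul x (y + w) = mul x y + mul x w := by
  funext A
  rw [Pi.add_apply, mul_apply, mul_apply, mul_apply,
    ← finsum_add_distrib (conv_support_finite hx hy A) (conv_support_finite hx hw A)]
  exact finsum_congr fun B => by rw [Pi.add_apply, mul_add]

lemma mul_sub_right {x y w : H r → ℚ} (hx : NuFinite ν x) (hy : NuFinite ν y)
    (hw : NuFinite ν w) : mul x (y - w) = mul x y - mul x w := by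
  funext A
  rw [Pi.sub_apply, mul_apply, mul_apply, mul_apply,
    ← finsum_sub_distrib (conv_support_finite hx hy A) (conv_support_finite hx hw A)]
  exact finsum_congr fun B => by rw [Pi.sub_apply, mul_sub]

lemma mul_add_left {x y w : H r → ℚ} (hx : NuFinite ν x) (hy : NuFinite ν y)
    (hw : NuFinite ν w) : mul (x + y) w = mul x w + mul y w := by
  rw [mul_comm', mul_add_right hw hx hy, mul_comm' w x, mul_comm' w y]

lemma mul_neg_right (x y : H r → ℚ) : mul x (-y) = -(mul x y) := by
  funext A
  rw [Pi.neg_apply, mul_apply, mul_apply, ← finsum_neg_distrib]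
  exact finsum_congr fun B => by rw [Pi.neg_apply, mul_neg]

lemma mul_assoc' {x y w : H r → ℚ} (hx : NuFinite ν x) (hy : NuFinite ν y)
    (hw : NuFinite ν w) : mul (mul x y) w = mul x (mul y w) := by
  classical
  obtain ⟨mx, hmx⟩ := hx.lb
  obtain ⟨my, hmy⟩ := hy.lb
  obtain ⟨mw, hmw⟩ := hw.lb
  funext A
  set n := ν A with hn
  set Sx : Finset (H r) := (hx (n - my - mw)).toFinset with hSx
  set Sy : Finset (H r) := (hy (n - mx - mw)).toFinset with hSy
  have hmemSx : ∀ {C : H r}, C ∈ Sx ↔ (x C ≠ 0 ∧ ν C ≤ n - my - mw) := fun {C} =>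
    (hx (n - my - mw)).mem_toFinset
  have hmemSy : ∀ {C : H r}, C ∈ Sy ↔ (y C ≠ 0 ∧ ν C ≤ n - mx - mw) := fun {C} =>
    (hy (n - mx - mw)).mem_toFinset
  have key1 : ∀ B : H r, mul x y B * w (A - B) = ∑ C ∈ Sx, x C * y (B - C) * w (A - B) := by
    intro B
    by_cases hwB : w (A - B) = 0
    · simp [hwB]
    · have hB : mw ≤ ν (A - B) := hmw _ hwB
      rw [mul_apply, finsum_eq_finset_sum_of_support_subset _ (s := Sx) ?_, Finset.sum_mul]
      intro C hC
      rcases mul_ne_zero_iff.1 hC with ⟨h1, h2⟩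
      have e1 := hmy _ h2
      have e2 : ν (B - C) = ν B - ν C := nu_sub B C
      have e3 : ν (A - B) = ν A - ν B := nu_sub A B
      exact Finset.mem_coe.2 (hmemSx.2 ⟨h1, by omega⟩)
  set SB : Finset (H r) := Sx + Sy with hSB
  have lhs2 : mul (mul x y) w A = ∑ B ∈ SB, ∑ C ∈ Sx, x C * y (B - C) * w (A - B) := by
    rw [mul_apply, finsum_congr key1]
    apply finsum_eq_finset_sum_of_support_subset
    intro B hB
    have hex : ∃ C ∈ Sx, x C * y (B - C) * w (A - B) ≠ 0 := by
      by_contra hc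
      push_neg at hc
      exact hB (Finset.sum_eq_zero hc)
    obtain ⟨C, hCmem, hC⟩ := hex
    have h1 : x C ≠ 0 := fun h => hC (by simp [h])
    have h2 : y (B - C) ≠ 0 := fun h => hC (by simp [h])
    have h3 : w (A - B) ≠ 0 := fun h => hC (by simp [h])
    have e1 := hmx _ h1
    have e2 := hmw _ h3
    have e3 : ν (B - C) = ν B - ν C := nu_sub B C
    have e4 : ν (A - B) = ν A - ν B := nu_sub A B
    have hmem2 : B - C ∈ Sy := hmemSy.2 ⟨h2, by omega⟩
    have : C + (B - C) ∈ Sx + Sy := Finset.add_mem_add hCmem hmem2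
    simpa using this
  have key2 : ∀ C ∈ Sx, ∑ B ∈ SB, x C * y (B - C) * w (A - B)
      = ∑ D ∈ Sy, x C * y D * w (A - C - D) := by
    intro C hC
    have hxC : x C ≠ 0 := (hmemSx.1 hC).1
    have step1 : ∑ B ∈ SB, x C * y (B - C) * w (A - B)
        = ∑ᶠ B, x C * y (B - C) * w (A - B) := by
      symm
      apply finsum_eq_finset_sum_of_support_subset
      intro B hB
      have h2 : y (B - C) ≠ 0 := fun h => hB (by simp [h])
      have h3 : w (A - B) ≠ 0 := fun h => hB (by simp [h])
      have e1 := hmx _ hxC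
      have e2 := hmw _ h3
      have e3 : ν (B - C) = ν B - ν C := nu_sub B C
      have e4 : ν (A - B) = ν A - ν B := nu_sub A B
      have hmem2 : B - C ∈ Sy := hmemSy.2 ⟨h2, by omega⟩
      have : C + (B - C) ∈ Sx + Sy := Finset.add_mem_add hC hmem2
      simpa using this
    have step2 : (∑ᶠ B, x C * y (B - C) * w (A - B)) = ∑ᶠ D, x C * y D * w (A - C - D) := by
      calc ∑ᶠ B, x C * y (B - C) * w (A - B)
          = ∑ᶠ B, x C * y (B - C) * w (A - C - (B - C)) := by
            refine finsum_congr fun B => ?_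
            have : A - C - (B - C) = A - B := by abel
            rw [this]
        _ = ∑ᶠ D, x C * y D * w (A - C - D) :=
            finsum_comp (g := fun D => x C * y D * w (A - C - D)) (fun B => B - C)
              (Equiv.subRight C).bijective
    have step3 : (∑ᶠ D, x C * y D * w (A - C - D)) = ∑ D ∈ Sy, x C * y D * w (A - C - D) := by
      apply finsum_eq_finset_sum_of_support_subset
      intro D hD
      have h2 : y D ≠ 0 := fun h => hD (by simp [h])
      have h3 : w (A - C - D) ≠ 0 := fun h => hD (by simp [h])
      have e1 := hmx _ hxC
      have e2 := hmw _ h3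
      have e3 : ν (A - C - D) = ν A - ν C - ν D := by rw [nu_sub, nu_sub]
      exact Finset.mem_coe.2 (hmemSy.2 ⟨h2, by omega⟩)
    rw [step1, step2, step3]
  have rhs2 : mul x (mul y w) A = ∑ C ∈ Sx, ∑ D ∈ Sy, x C * y D * w (A - C - D) := by
    have key3 : ∀ C : H r, x C * mul y w (A - C) = ∑ D ∈ Sy, x C * y D * w (A - C - D) := by
      intro C
      by_cases hxC : x C = 0
      · simp [hxC]
      · rw [mul_apply, finsum_eq_finset_sum_of_support_subset _ (s := Sy) ?_, Finset.mul_sum]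
        · exact Finset.sum_congr rfl fun D _ => by ring
        · intro D hD
          have h2 : y D ≠ 0 := fun h => hD (by simp [h])
          have h3 : w (A - C - D) ≠ 0 := fun h => hD (by simp [h])
          have e1 := hmx _ hxC
          have e2 := hmw _ h3
          have e3 : ν (A - C - D) = ν A - ν C - ν D := by rw [nu_sub, nu_sub]
          exact Finset.mem_coe.2 (hmemSy.2 ⟨h2, by omega⟩)
    rw [mul_apply, finsum_congr key3]
    apply finsum_eq_finset_sum_of_support_subset
    intro C hC
    have hex : ∃ D ∈ Sy, x C * y D * w (A - C - D) ≠ 0 := by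
      by_contra hc
      push_neg at hc
      exact hC (Finset.sum_eq_zero hc)
    obtain ⟨D, hDmem, hD⟩ := hex
    have h1 : x C ≠ 0 := fun h => hD (by simp [h])
    have h2 : y D ≠ 0 := fun h => hD (by simp [h])
    have h3 : w (A - C - D) ≠ 0 := fun h => hD (by simp [h])
    have e1 := hmy _ h2
    have e2 := hmw _ h3
    have e3 : ν (A - C - D) = ν A - ν C - ν D := by rw [nu_sub, nu_sub]
    exact Finset.mem_coe.2 (hmemSx.2 ⟨h1, by omega⟩)
  rw [lhs2, rhs2, Finset.sum_comm]
  exact Finset.sum_congr rfl key2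

lemma inv_unique {x y y' : H r → ℚ} (hx : NuFinite ν x) (hy : NuFinite ν y)
    (hy' : NuFinite ν y') (h1 : mul x y = one r) (h2 : mul y' x = one r) : y' = y :=
  calc y' = mul y' (one r) := (mul_one_right y').symm
    _ = mul y' (mul x y) := by rw [h1]
    _ = mul (mul y' x) y := (mul_assoc' hy' hx hy).symm
    _ = mul (one r) y := by rw [h2]
    _ = y := mul_one_left y

end Nov

namespace Nov

open Function

variable {r : ℕ} {μ ν : H r →+ ℤ} {Astar : H r} {z : H r → (H r →+ ℚ)}

/-! ### Geometric series -/

noncomputable def npow (v : H r → ℚ) : ℕ → (H r → ℚ)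
  | 0 => one r
  | n + 1 => mul v (npow v n)

lemma npow_nufinite {v : H r → ℚ} (hv : NuFinite ν v) : ∀ n, NuFinite ν (npow v n)
  | 0 => nuFinite_one
  | n + 1 => hv.mul (npow_nufinite hv n)

lemma npow_hom {v : H r → ℚ} (hv : HomD μ 0 v) : ∀ n, HomD μ 0 (npow v n)
  | 0 => homD_one
  | n + 1 => (hv.mul (npow_hom hv n)).of_eq (by ring)

lemma npow_ge {v : H r → ℚ} (hv : MemGE ν 1 v) : ∀ n : ℕ, MemGE ν n (npow v n)
  | 0 => memGE_one.of_eq (by omega)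
  | n + 1 => (hv.mul (npow_ge hv n)).of_eq (by omega)

lemma npow_eq_zero_of_big {v : H r → ℚ} (hv : MemGE ν 1 v) {n : ℕ} {A : H r}
    (h : ν A < n) : npow v n A = 0 := by
  by_contra hc
  have := npow_ge hv n A hc
  omega

noncomputable def geom (v : H r → ℚ) : H r → ℚ := fun A => ∑ᶠ n : ℕ, npow v n A

lemma geom_apply (v : H r → ℚ) (A : H r) : geom v A = ∑ᶠ n : ℕ, npow v n A := rfl

lemma geom_eq_sum {v : H r → ℚ} (hv : MemGE ν 1 v) (A : H r) (M : ℕ) (hM : ν A ≤ (M : ℤ)) :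
    geom v A = ∑ n ∈ Finset.range (M + 1), npow v n A := by
  apply finsum_eq_finset_sum_of_support_subset
  intro n hn
  simp only [Finset.coe_range, Set.mem_Iio]
  by_contra h
  push_neg at h
  exact hn (npow_eq_zero_of_big hv (by omega))

lemma geom_nufinite {v : H r → ℚ} (hv : NuFinite ν v) (hv1 : MemGE ν 1 v) :
    NuFinite ν (geom v) := by
  intro C
  have hs : {A | geom v A ≠ 0 ∧ ν A ≤ C} ⊆
      ⋃ n ∈ Finset.range (C.toNat + 1), {A : H r | npow v n A ≠ 0 ∧ ν A ≤ C} := by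
    rintro A ⟨hA, hC⟩
    rw [geom_apply] at hA
    obtain ⟨n, hn⟩ := finsum_ne_zero hA
    have hle : (n : ℤ) ≤ ν A := by
      by_contra h
      exact hn (npow_eq_zero_of_big hv1 (by omega))
    exact Set.mem_iUnion.2 ⟨n, Set.mem_iUnion.2 ⟨Finset.mem_range.2 (by omega), ⟨hn, hC⟩⟩⟩
  exact (Set.Finite.biUnion (Finset.range (C.toNat + 1)).finite_toSet
    (fun n _ => npow_nufinite hv n C)).subset hs

lemma geom_ge0 {v : H r → ℚ} (hv1 : MemGE ν 1 v) : MemGE ν 0 (geom v) := by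
  intro A hA
  rw [geom_apply] at hA
  obtain ⟨n, hn⟩ := finsum_ne_zero hA
  have := npow_ge hv1 n A hn
  omega

lemma geom_hom {v : H r → ℚ} (hv : HomD μ 0 v) : HomD μ 0 (geom v) := by
  intro A hA
  rw [geom_apply] at hA
  obtain ⟨n, hn⟩ := finsum_ne_zero hA
  exact npow_hom hv n A hn

lemma mul_v_geom {v : H r → ℚ} (hv : NuFinite ν v) (hv1 : MemGE ν 1 v) (A : H r) (M : ℕ)
    (hM : ν A ≤ (M : ℤ)) :
    mul v (geom v) A = ∑ n ∈ Finset.range (M + 1), npow v (n + 1) A := by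
  classical
  set T : Finset (H r) := (hv (ν A)).toFinset with hT
  have hmemT : ∀ {B : H r}, B ∈ T ↔ (v B ≠ 0 ∧ ν B ≤ ν A) := fun {B} => (hv (ν A)).mem_toFinset
  have h1 : mul v (geom v) A = ∑ B ∈ T, v B * geom v (A - B) := by
    rw [mul_apply]
    apply finsum_eq_finset_sum_of_support_subset
    intro B hB
    rcases mul_ne_zero_iff.1 hB with ⟨hb1, hb2⟩
    have h0 := geom_ge0 hv1 _ hb2
    have e1 : ν (A - B) = ν A - ν B := nu_sub A B
    exact Finset.mem_coe.2 (hmemT.2 ⟨hb1, by omega⟩)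
  have h2 : ∀ B ∈ T, v B * geom v (A - B) = ∑ n ∈ Finset.range (M + 1), v B * npow v n (A - B) := by
    intro B hB
    have hνB : 1 ≤ ν B := hv1 _ (hmemT.1 hB).1
    have e1 : ν (A - B) = ν A - ν B := nu_sub A B
    rw [geom_eq_sum hv1 (A - B) M (by omega), Finset.mul_sum]
  rw [h1, Finset.sum_congr rfl h2, Finset.sum_comm]
  refine Finset.sum_congr rfl fun n _ => ?_
  have : npow v (n + 1) A = mul v (npow v n) A := rfl
  rw [this, mul_apply]
  symm
  apply finsum_eq_finset_sum_of_support_subset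
  intro B hB
  rcases mul_ne_zero_iff.1 hB with ⟨hb1, hb2⟩
  have h0 := npow_ge hv1 n _ hb2
  have e1 : ν (A - B) = ν A - ν B := nu_sub A B
  exact Finset.mem_coe.2 (hmemT.2 ⟨hb1, by omega⟩)

lemma one_sub_mul_geom {v : H r → ℚ} (hv : NuFinite ν v) (hv1 : MemGE ν 1 v) :
    mul (one r - v) (geom v) = one r := by
  have hg := geom_nufinite hv hv1
  have hsplit : mul (one r - v) (geom v) = geom v - mul v (geom v) := by
    rw [mul_comm', mul_sub_right hg nuFinite_one hv, mul_one_right, mul_comm' (geom v) v]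
  rw [hsplit]
  funext A
  set M : ℕ := (max (ν A) 0).toNat with hMdef
  have hM : ν A ≤ (M : ℤ) := by omega
  rw [Pi.sub_apply, geom_eq_sum hv1 A M hM, mul_v_geom hv hv1 A M hM,
    ← Finset.sum_sub_distrib, Finset.sum_range_sub']
  have hz : npow v (M + 1) A = 0 := npow_eq_zero_of_big hv1 (by push_cast; omega)
  rw [hz, sub_zero]
  rfl

/-! ### The derivation at low levels -/

lemma dz_low (hz : Admissible μ ν Astar z) (hνA : ν Astar = -1)
    {x : H r → ℚ} (hx1 : MemGE ν 1 x) {A : H r} (hA : ν A ≤ 0) :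
    dz z x A = x (A - Astar) := by
  rw [dz_apply, finsum_eq_single _ (A - Astar) ?_]
  · rw [sub_sub_cancel, hz.at_star]
    by_cases h : x (A - Astar) = 0
    · simp [h]
    · have h1 : 1 ≤ ν (A - Astar) := hx1 _ h
      have h2 : ν (A - Astar) = ν A - ν Astar := nu_sub A Astar
      have h3 : ν (A - Astar) = 1 := by omega
      rw [h3]
      norm_num
  · intro B hB
    by_cases hxB : x B = 0
    · simp [hxB]
    · have h1 := hx1 _ hxB
      have hne : A - B ≠ Astar := fun h => hB (by rw [← h]; abel)
      by_cases hzz : z (A - B) = 0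
      · simp [hzz]
      · exfalso
        have h0 : (0 : ℤ) ≤ ν (A - B) := by
          by_contra hn
          exact hzz (hz.vanish_neg _ hne (by omega))
        have h2 : ν (A - B) = ν A - ν B := nu_sub A B
        omega

/-! ### Homogeneity of inverses -/

lemma homD_of_inv {d : ℤ} {g y : H r → ℚ} (hg : NuFinite ν g) (hy : NuFinite ν y)
    (hgh : HomD μ d g) (h1 : mul g y = one r) (h2 : mul y g = one r) :
    HomD μ (-d) y := by
  classical
  set y₀ : H r → ℚ := fun A => if 2 * μ A = -d then y A else 0 with hy₀
  set y' : H r → ℚ := fun A => if 2 * μ A = -d then 0 else y A with hy'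
  have hsplit : y = y₀ + y' := by
    funext A
    by_cases h : 2 * μ A = -d <;> simp [hy₀, hy', h]
  have hy₀Nu : NuFinite ν y₀ := hy.subset_supp fun A hA => by
    by_cases h : 2 * μ A = -d
    · simpa [hy₀, h] using hA
    · simp [hy₀, h] at hA
  have hy'Nu : NuFinite ν y' := hy.subset_supp fun A hA => by
    by_cases h : 2 * μ A = -d
    · simp [hy', h] at hA
    · simpa [hy', h] using hA
  have h2' : mul y₀ g + mul y' g = one r := by
    rw [← mul_add_left hy₀Nu hy'Nu hg, ← hsplit]
    exact h2
  have hy₀deg : ∀ A, mul y₀ g A ≠ 0 → 2 * μ A = 0 := by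
    intro A hA
    rw [mul_apply] at hA
    obtain ⟨B, hB⟩ := finsum_ne_zero hA
    rcases mul_ne_zero_iff.1 hB with ⟨hb1, hb2⟩
    have e1 : 2 * μ B = -d := by
      by_contra hc
      exact hb1 (by simp [hy₀, hc])
    have e2 := hgh _ hb2
    have e3 : μ (A - B) = μ A - μ B := map_sub μ A B
    omega
  have hy'zero : mul y' g = 0 := by
    funext A
    rw [Pi.zero_apply]
    by_cases hdeg : 2 * μ A = 0
    · rw [mul_apply]
      apply finsum_eq_zero_of_forall_eq_zero
      intro B
      by_cases hgB : g (A - B) = 0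
      · simp [hgB]
      · have e2 := hgh _ hgB
        have e3 : μ (A - B) = μ A - μ B := map_sub μ A B
        have e4 : 2 * μ B = -d := by omega
        simp [hy', e4]
    · have hone : one r A = 0 := by
        have hA0 : A ≠ 0 := by
          intro h
          subst h
          simp at hdeg
        simp [one, delta, hA0]
      have h0 : mul y₀ g A = 0 := by
        by_contra hc
        exact hdeg (hy₀deg A hc)
      have := congrFun h2' A
      rw [Pi.add_apply, h0, hone, zero_add] at this
      exact this
  have hy'0 : y' = 0 := by
    calc y' = mul y' (one r) := (mul_one_right y').symm
      _ = mul y' (mul g y) := by rw [h1]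
      _ = mul (mul y' g) y := (mul_assoc' hy'Nu hg hy).symm
      _ = mul 0 y := by rw [hy'zero]
      _ = 0 := mul_zero_left y
  intro A hA
  by_contra hc
  have : y' A = y A := by simp [hy', hc]
  rw [hy'0] at this
  exact hA (by rw [← this]; rfl)

end Nov


open Nov in
/-- If `f ∈ Λ^i_{≥1}` is homogeneous and `q^{A_*}·f` is invertible in
`Λ_{≥0}`, then `∂_z f` lies in `q^{A_*}·f + Λ_{≥1}` and is invertible in `Λ`;
consequently the Schwarzian `S_z f` is well defined and lies in `Λ⁴_{≥0}`. -/
theorem schwarzian_well_defined (r : ℕ) (μ ν : H r →+ ℤ) (Astar : H r)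
    (hμA : μ Astar = 1) (hνA : ν Astar = -1)
    (z : H r → (H r →+ ℚ)) (hz : Admissible μ ν Astar z)
    (i : ℤ) (f : H r → ℚ)
    (hf : MemHom μ ν i f) (hge : MemGE ν 1 f)
    (hinv : ∃ y, MemLambda μ ν y ∧ MemGE ν 0 y ∧
        mul (mul (delta Astar) f) y = one r ∧
        mul y (mul (delta Astar) f) = one r) :
    (MemLambda μ ν (dz z f - mul (delta Astar) f) ∧
      MemGE ν 1 (dz z f - mul (delta Astar) f)) ∧
    (∃ g, MemLambda μ ν g ∧ mul (dz z f) g = one r ∧ mul g (dz z f) = one r) ∧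
    (MemHom μ ν 4 (Sz μ ν z f) ∧ MemGE ν 0 (Sz μ ν z f)) := by
  classical
  obtain ⟨y, hyL, hyGE, hgy, hyg⟩ := hinv
  obtain ⟨hfHom, hfNu⟩ := hf
  have hyNu : NuFinite ν y := hyL.1
  set g : H r → ℚ := mul (delta Astar) f with hgdef
  have hδNu : NuFinite ν (delta Astar) := nuFinite_delta Astar
  have hgNu : NuFinite ν g := hδNu.mul hfNu
  have hgHom : HomD μ (i + 2) g :=
    ((homD_delta (μ := μ) Astar).mul hfHom).of_eq (by rw [hμA]; ring)
  have hgGE : MemGE ν 0 g := ((memGE_delta (ν := ν) Astar).mul hge).of_eq (by rw [hνA]; ring)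
  -- facts about `∂_z f`
  have hdfNu : NuFinite ν (dz z f) := dz_nufinite hz hνA hfNu
  have hdfHom : HomD μ (i + 2) (dz z f) := dz_hom hz hfHom
  have hfGE0 : MemGE ν 0 f := hge.mono (by norm_num)
  have hdfGE : MemGE ν 0 (dz z f) := dz_ge0 hz hνA hfGE0
  -- the error term `e`
  set e : H r → ℚ := dz z f - g with hedef
  have heNu : NuFinite ν e := hdfNu.sub hgNu
  have heHom : HomD μ (i + 2) e := hdfHom.sub hgHom
  have heGE : MemGE ν 1 e := by
    intro A hA
    by_contra hc
    push_neg at hc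
    apply hA
    have h1 : dz z f A = f (A - Astar) := dz_low hz hνA hge (by omega)
    have h2 : g A = f (A - Astar) := by rw [hgdef, mul_delta_left]
    rw [hedef, Pi.sub_apply, h1, h2, sub_self]
  have part1 : MemLambda μ ν (dz z f - g) ∧ MemGE ν 1 (dz z f - g) :=
    ⟨homD_memLambda heNu heHom, heGE⟩
  -- homogeneity of the inverse `y`
  have hyHom : HomD μ (-(i + 2)) y := homD_of_inv hgNu hyNu hgHom hgy hyg
  -- the correction `u = y·e` and `v = -u`
  set u : H r → ℚ := mul y e with hudef
  have huNu : NuFinite ν u := hyNu.mul heNu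
  have huGE : MemGE ν 1 (u : H r → ℚ) := (hyGE.mul heGE).of_eq (by ring)
  set v : H r → ℚ := -u with hvdef
  have hvNu : NuFinite ν v := huNu.neg
  have hvHom : HomD μ 0 v := ((hyHom.mul heHom).of_eq (by ring)).neg
  have hvGE : MemGE ν 1 v := huGE.neg
  set S : H r → ℚ := geom v with hSdef
  have hSNu : NuFinite ν S := geom_nufinite hvNu hvGE
  have hSHom : HomD μ 0 S := geom_hom hvHom
  have hSGE : MemGE ν 0 S := geom_ge0 hvGE
  have hkey : mul (one r - v) S = one r := one_sub_mul_geom hvNu hvGE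
  -- factorization `∂_z f = g·(1 - v)`
  have hfactor : dz z f = mul g (one r - v) := by
    have h1 : mul g (one r - v) = mul g (one r) - mul g v :=
      mul_sub_right hgNu nuFinite_one hvNu
    have h2 : mul g v = -e := by
      rw [hvdef, mul_neg_right, hudef, ← mul_assoc' hgNu hyNu heNu, hgy, mul_one_left]
    rw [h1, mul_one_right, h2, sub_neg_eq_add, hedef]
    funext A
    simp only [Pi.add_apply, Pi.sub_apply]
    ring
  -- the inverse of `∂_z f`
  set gi : H r → ℚ := mul S y with hgidef
  have hgiNu : NuFinite ν gi := hSNu.mul hyNu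
  have hgiHom : HomD μ (-(i + 2)) gi := (hSHom.mul hyHom).of_eq (by ring)
  have hgiGE : MemGE ν 0 gi := (hSGE.mul hyGE).of_eq (by ring)
  have honevNu : NuFinite ν (one r - v) := nuFinite_one.sub hvNu
  have hdf_gi : mul (dz z f) gi = one r := by
    rw [hfactor, hgidef]
    calc mul (mul g (one r - v)) (mul S y)
        = mul g (mul (one r - v) (mul S y)) := mul_assoc' hgNu honevNu (hSNu.mul hyNu)
      _ = mul g (mul (mul (one r - v) S) y) := by rw [mul_assoc' honevNu hSNu hyNu]
      _ = mul g (mul (one r) y) := by rw [hkey]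
      _ = mul g y := by rw [mul_one_left]
      _ = one r := hgy
  have hgi_df : mul gi (dz z f) = one r := by rw [mul_comm']; exact hdf_gi
  have hgiL : MemLambda μ ν gi := homD_memLambda hgiNu hgiHom
  have hex : ∃ w, MemLambda μ ν w ∧ mul (dz z f) w = one r ∧ mul w (dz z f) = one r :=
    ⟨gi, hgiL, hdf_gi, hgi_df⟩
  have hinvN : invN μ ν (dz z f) = gi := by
    rw [invN, dif_pos hex]
    obtain ⟨hL, h1, h2⟩ := hex.choose_spec
    exact inv_unique hdfNu hgiNu hL.1 hdf_gi h2
  -- the Schwarzian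
  have hD2Nu : NuFinite ν (dz z (dz z f)) := dz_nufinite hz hνA hdfNu
  have hD2Hom : HomD μ (i + 4) (dz z (dz z f)) := (dz_hom hz hdfHom).of_eq (by ring)
  have hD2GE : MemGE ν 0 (dz z (dz z f)) := dz_ge0 hz hνA hdfGE
  set h : H r → ℚ := mul (dz z (dz z f)) gi with hhdef
  have hhNu : NuFinite ν h := hD2Nu.mul hgiNu
  have hhHom : HomD μ 2 h := (hD2Hom.mul hgiHom).of_eq (by ring)
  have hhGE : MemGE ν 0 h := (hD2GE.mul hgiGE).of_eq (by ring)
  have hSz : Sz μ ν z f = dz z h - (1 / 2 : ℚ) • mul h h := by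
    rw [Sz, hinvN, hhdef]
  refine ⟨part1, ⟨gi, hgiL, hdf_gi, hgi_df⟩, ?_⟩
  rw [hSz]
  have hdzhNu : NuFinite ν (dz z h) := dz_nufinite hz hνA hhNu
  have hdzhHom : HomD μ 4 (dz z h) := (dz_hom hz hhHom).of_eq (by ring)
  have hdzhGE : MemGE ν 0 (dz z h) := dz_ge0 hz hνA hhGE
  have hh2Nu : NuFinite ν (mul h h) := hhNu.mul hhNu
  have hh2Hom : HomD μ 4 (mul h h) := (hhHom.mul hhHom).of_eq (by ring)
  have hh2GE : MemGE ν 0 (mul h h) := hhGE.mul hhGE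
  exact ⟨⟨hdzhHom.sub (hh2Hom.smul _), hdzhNu.sub ((hh2Nu.smul _))⟩,
    hdzhGE.sub ((hh2GE.smul _).of_eq rfl)⟩
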